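/- arXiv:2406.12989 — 2 statements merged into one kernel-verified Lean document; each statement's English description precedes it below -/
import Mathlib

section
/- Let T be the complete q-ary tree of depth d (q ≥ 2, d ≥ 1). For every S ⊆ V(T) there exists a left-ordered set S' ⊆ V(T) such that S' has the same number of vertices as S in every level of T and |δ(S')| ≤ |δ(S)|. -/
open scoped Classical

/-- A vertex of the complete `q`-ary tree of depth `d`: a sequence over `Fin q`
of length at most `d`. -/
def QV (q d : ℕ) : Type := {l : List (Fin q) // l.length ≤ d}

instance (q d : ℕ) : Finite (QV q d) :=
  (List.finite_length_le (Fin q) d).to_subtype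

/-- The complete `q`-ary tree of depth `d`: two vertices are adjacent exactly when
one is obtained from the other by appending a single element. -/
def qTree (q d : ℕ) : SimpleGraph (QV q d) where
  Adj u v := (∃ a : Fin q, v.val = u.val ++ [a]) ∨ (∃ a : Fin q, u.val = v.val ++ [a])
  symm := by constructor; intro u v h; tauto
  loopless := by
    constructor
    rintro u (⟨a, ha⟩ | ⟨a, ha⟩) <;>
    · have := congrArg List.length ha
      simp at this

/-- The vertex border `δ(S)`: vertices outside `S` with a neighbour in `S`. -/
def vertexBorder {V : Type*} (G : SimpleGraph V) (S : Set V) : Set V :=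
  {v | v ∉ S ∧ ∃ u ∈ S, G.Adj u v}

/-- `Φ_V(G, s)`: the minimum border size over vertex sets of size `s`. -/
noncomputable def isoProfile {V : Type*} (G : SimpleGraph V) (s : ℕ) : ℕ :=
  sInf ((fun S => (vertexBorder G S).ncard) '' {S : Set V | S.ncard = s})

/-- `Φ_V(G)`: the vertex-isoperimetric peak, `max_{0 ≤ s ≤ |V|} Φ_V(G, s)`. -/
noncomputable def isoPeak {V : Type*} (G : SimpleGraph V) : ℕ :=
  sSup (isoProfile G '' Set.Icc 0 (Nat.card V))

/-- The vertex separation number: for each linear layout (a bijection from the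
vertices to `{1, …, |V|}`, here modelled as `V ≃ Fin |V|`) take the maximum
border size of its prefix sets, then minimize over layouts. -/
noncomputable def vsNum {V : Type*} (G : SimpleGraph V) : ℕ :=
  sInf {n | ∃ L : V ≃ Fin (Nat.card V),
    n = sSup {m | ∃ i : Fin (Nat.card V),
      m = (vertexBorder G {u | (L u : ℕ) ≤ (i : ℕ)}).ncard}}

namespace QV

variable {q d : ℕ}

/-- Level `i`: vertices at distance `i` from the root. -/
def level (q d : ℕ) (i : ℕ) : Set (QV q d) := {w | w.val.length = i}

/-- Descendants of `u` (including `u` itself). -/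
def desc (u : QV q d) : Set (QV q d) := {w | u.val <+: w.val}

/-- `w` is a child of `u`. -/
def IsChildOf (w u : QV q d) : Prop := ∃ a : Fin q, w.val = u.val ++ [a]

/-- `u` is to the left of `v`: same level and lexicographically smaller. -/
def LeftOf (u v : QV q d) : Prop :=
  u.val.length = v.val.length ∧ List.Lex (· < ·) u.val v.val

/-- `u` precedes `v` in the breadth-first ordering of the tree. -/
def Precedes (u v : QV q d) : Prop :=
  u.val.length < v.val.length ∨
    (u.val.length = v.val.length ∧ List.Lex (· < ·) u.val v.val)

/-- `u, v` are swappable in `S`. -/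
def Swappable (S : Set (QV q d)) (u v : QV q d) : Prop :=
  LeftOf u v ∧ ((u ∉ S ∧ v ∈ S) ∨
    (u ∉ S ∧ v ∉ S ∧ (∀ w, IsChildOf w u → w ∉ S) ∧ (∃ w, IsChildOf w v ∧ w ∈ S)))

/-- Level `i` of `S` is left-ordered: no swappable pair in level `i`. -/
def LevelLeftOrdered (S : Set (QV q d)) (i : ℕ) : Prop :=
  ∀ u v : QV q d, u.val.length = i → ¬ Swappable S u v

/-- `S` is left-ordered: every level is left-ordered. -/
def LeftOrdered (S : Set (QV q d)) : Prop := ∀ i, LevelLeftOrdered S i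

/-- The canonical map used in a treeswap between `u` and `v`: a descendant of `u`
is sent to the corresponding descendant of `v` (same suffix), and vice versa;
other vertices are fixed. -/
noncomputable def swapAt (u v w : QV q d) : QV q d :=
  if h : u.val <+: w.val ∧ (v.val ++ w.val.drop u.val.length).length ≤ d then
    ⟨v.val ++ w.val.drop u.val.length, h.2⟩
  else if h' : v.val <+: w.val ∧ (u.val ++ w.val.drop v.val.length).length ≤ d then
    ⟨u.val ++ w.val.drop v.val.length, h'.2⟩
  else w

/-- The treeswap of `S` between `u` and `v`. -/
noncomputable def treeswap (S : Set (QV q d)) (u v : QV q d) : Set (QV q d) :=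
  {w | swapAt u v w ∈ S}

/-- The strict partial order `A < B` on subsets of the tree. -/
def SetPrec (A B : Set (QV q d)) : Prop :=
  (∀ i, (A ∩ level q d i).ncard = (B ∩ level q d i).ncard) ∧
  ∃ v, v ∈ A ∧ v ∉ B ∧ ∀ w, Precedes w v → (w ∈ A ↔ w ∈ B)

/-- `S` is down-compressed. -/
def DownCompressed (S : Set (QV q d)) : Prop :=
  ∀ u ∈ S, ∀ v ∉ S,
    (vertexBorder (qTree q d) S).ncard ≤
      (vertexBorder (qTree q d) ((S ∪ {v}) \ {u})).ncard ∧
    (u.val.length < v.val.length →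
      (vertexBorder (qTree q d) S).ncard <
        (vertexBorder (qTree q d) ((S ∪ {v}) \ {u})).ncard)

/-- `S'` is an aeolian compression of `S`. -/
def IsAeolianCompression (S S' : Set (QV q d)) : Prop :=
  ∃ u v : QV q d, LeftOf u v ∧
    ∃ R A : Set (QV q d), R.Nonempty ∧ R ⊆ S ∧ R ⊆ desc v ∧
      A ⊆ desc u ∧ Disjoint A S ∧ A.ncard = R.ncard ∧
      S' = (S \ R) ∪ A ∧
      S'.ncard = S.ncard ∧
      (vertexBorder (qTree q d) S').ncard ≤ (vertexBorder (qTree q d) S).ncard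

/-- `S` is aeolian-compressed. -/
def AeolianCompressed (S : Set (QV q d)) : Prop :=
  LeftOrdered S ∧ DownCompressed S ∧ ∀ S', ¬ IsAeolianCompression S S'

end QV

namespace LO

variable {q d : ℕ}
set_option linter.unusedSectionVars false
set_option maxHeartbeats 1000000

/-! ### The encoding of vertices by natural numbers (BFS order) -/

def enc (q : ℕ) : List (Fin q) → ℕ
  | [] => 0
  | a :: t => ((a : ℕ) + 1) * (q + 1) ^ t.length + enc q t

lemma enc_lt_pow (l : List (Fin q)) : enc q l < (q + 1) ^ l.length := by
  induction l with
  | nil => simp [enc]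
  | cons a t ih =>
      have ha : (a : ℕ) + 1 ≤ q := Nat.succ_le_of_lt a.isLt
      have h1 : ((a : ℕ) + 1) * (q + 1) ^ t.length ≤ q * (q + 1) ^ t.length :=
        Nat.mul_le_mul_right _ ha
      have h2 : enc q (a :: t) < q * (q + 1) ^ t.length + (q + 1) ^ t.length := by
        simpa [enc] using Nat.add_lt_add_of_le_of_lt h1 ih
      calc enc q (a :: t) < q * (q + 1) ^ t.length + (q + 1) ^ t.length := h2
        _ = (q + 1) ^ (t.length + 1) := by ring
        _ = (q + 1) ^ (a :: t).length := by simp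

lemma pow_le_enc (l : List (Fin q)) (h : l ≠ []) :
    (q + 1) ^ (l.length - 1) ≤ enc q l := by
  cases l with
  | nil => simp at h
  | cons a t =>
      have : (q + 1) ^ t.length ≤ ((a : ℕ) + 1) * (q + 1) ^ t.length :=
        Nat.le_mul_of_pos_left _ (by omega)
      simp only [enc, List.length_cons, Nat.add_sub_cancel]
      omega

lemma enc_lt_of_length_lt {l l' : List (Fin q)} (h : l.length < l'.length) :
    enc q l < enc q l' := by
  have h1 : enc q l < (q + 1) ^ l.length := enc_lt_pow l
  have h2 : l' ≠ [] := by
    intro e; subst e; simp at h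
  have h3 : (q + 1) ^ (l'.length - 1) ≤ enc q l' := pow_le_enc l' h2
  have h4 : (q + 1) ^ l.length ≤ (q + 1) ^ (l'.length - 1) :=
    Nat.pow_le_pow_right (by omega) (by omega)
  omega

lemma enc_lt_of_lex {l l' : List (Fin q)} (hlen : l.length = l'.length)
    (h : List.Lex (· < ·) l l') : enc q l < enc q l' := by
  induction h with
  | nil => simp at hlen
  | @rel a t b t' hab =>
      have hlt : t.length = t'.length := by simpa using hlen
      have h1 : enc q t < (q + 1) ^ t.length := enc_lt_pow t
      have h2 : ((a : ℕ) + 1) + 1 ≤ (b : ℕ) + 1 := by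
        have : (a : ℕ) < (b : ℕ) := hab
        omega
      have h3 : (((a : ℕ) + 1) + 1) * (q + 1) ^ t.length ≤ ((b : ℕ) + 1) * (q + 1) ^ t.length :=
        Nat.mul_le_mul_right _ h2
      simp only [enc, ← hlt]
      nlinarith [Nat.zero_le (enc q t')]
  | @cons a t t' h ih =>
      have hlt : t.length = t'.length := by simpa using hlen
      have := ih hlt
      simp only [enc, hlt]
      omega

/-! ### Lexicographic order lemmas -/

lemma lex_irrefl (l : List (Fin q)) : ¬ List.Lex (· < ·) l l := by
  induction l with
  | nil => intro h; cases h
  | cons a t ih => intro h; cases h with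
    | rel h => exact lt_irrefl _ h
    | cons h => exact ih h

lemma lex_trichotomy (l l' : List (Fin q)) (hlen : l.length = l'.length) :
    l = l' ∨ List.Lex (· < ·) l l' ∨ List.Lex (· < ·) l' l := by
  induction l generalizing l' with
  | nil => cases l' with
    | nil => exact Or.inl rfl
    | cons b t' => simp at hlen
  | cons a t ih =>
      cases l' with
      | nil => simp at hlen
      | cons b t' =>
          have hlt : t.length = t'.length := by simpa using hlen
          rcases lt_trichotomy a b with h | h | h
          · exact Or.inr (Or.inl (List.Lex.rel h))
          · subst h
            rcases ih t' hlt with h | h | h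
            · exact Or.inl (by rw [h])
            · exact Or.inr (Or.inl (List.Lex.cons h))
            · exact Or.inr (Or.inr (List.Lex.cons h))
          · exact Or.inr (Or.inr (List.Lex.rel h))

lemma lex_append {l l' : List (Fin q)} (h : List.Lex (· < ·) l l')
    (hlen : l.length = l'.length) (s t : List (Fin q)) :
    List.Lex (· < ·) (l ++ s) (l' ++ t) := by
  induction h generalizing s t with
  | nil => simp at hlen
  | @rel a u b u' hab => exact List.Lex.rel hab
  | @cons a u u' h ih =>
      have hlt : u.length = u'.length := by simpa using hlen
      exact List.Lex.cons (ih hlt s t)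

lemma lex_snoc {x y : Fin q} (h : x < y) (l : List (Fin q)) :
    List.Lex (· < ·) (l ++ [x]) (l ++ [y]) := by
  induction l with
  | nil => exact List.Lex.rel h
  | cons a t ih => exact List.Lex.cons ih

lemma lex_dropLast {l l' : List (Fin q)} (h : List.Lex (· < ·) l l')
    (hlen : l.length = l'.length) :
    l.dropLast = l'.dropLast ∨ List.Lex (· < ·) l.dropLast l'.dropLast := by
  induction h with
  | nil => simp at hlen
  | @rel a u b u' hab =>
      cases u with
      | nil =>
          cases u' with
          | nil => exact Or.inl rfl
          | cons c w => simp at hlen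
      | cons c w =>
          cases u' with
          | nil => simp at hlen
          | cons c' w' =>
              right
              simpa using List.Lex.rel (l₁ := (c :: w).dropLast) (l₂ := (c' :: w').dropLast) hab
  | @cons a u u' h ih =>
      have hlt : u.length = u'.length := by simpa using hlen
      cases u with
      | nil =>
          cases u' with
          | nil => cases h
          | cons c' w' => simp at hlt
      | cons c w =>
          cases u' with
          | nil => simp at hlt
          | cons c' w' =>
              rcases ih hlt with h' | h'
              · left; simpa using congrArg (a :: ·) h'
              · right; simpa using List.Lex.cons (a := a) h'

/-! ### Properties of `swapAt` -/

lemma prefix_eq_of_len {u v w : List (Fin q)} (hl : u.length = v.length)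
    (h1 : u <+: w) (h2 : v <+: w) : u = v := by
  rw [List.prefix_iff_eq_take] at h1 h2
  rw [h1, h2, hl]

def par (u : QV q d) : QV q d :=
  ⟨u.val.dropLast, le_trans (by rw [List.length_dropLast]; exact Nat.sub_le _ _) u.prop⟩

lemma qTree_adj {x w : QV q d} : (qTree q d).Adj x w ↔
    (∃ a : Fin q, w.val = x.val ++ [a]) ∨ (∃ a : Fin q, x.val = w.val ++ [a]) := Iff.rfl

section swap
variable (u v : QV q d) (hl : u.val.length = v.val.length) (hne : u.val ≠ v.val)
include hl hne

lemma swap_val_of_pu {w : QV q d} (hp : u.val <+: w.val) :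
    (QV.swapAt u v w).val = v.val ++ w.val.drop u.val.length := by
  have hlen : (v.val ++ w.val.drop u.val.length).length ≤ d := by
    have := hp.length_le
    have := w.prop
    simp only [List.length_append, List.length_drop]
    omega
  have e : QV.swapAt u v w = (⟨v.val ++ w.val.drop u.val.length, hlen⟩ : QV q d) := by
    unfold QV.swapAt; exact dif_pos ⟨hp, hlen⟩
  exact congrArg Subtype.val e

lemma swap_val_of_pv {w : QV q d} (hp : v.val <+: w.val) :
    (QV.swapAt u v w).val = u.val ++ w.val.drop v.val.length := by
  have hnu : ¬ (u.val <+: w.val ∧ (v.val ++ w.val.drop u.val.length).length ≤ d) := by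
    rintro ⟨h1, -⟩
    exact hne (prefix_eq_of_len hl h1 hp)
  have hlen : (u.val ++ w.val.drop v.val.length).length ≤ d := by
    have := hp.length_le
    have := w.prop
    simp only [List.length_append, List.length_drop]
    omega
  have e : QV.swapAt u v w = (⟨u.val ++ w.val.drop v.val.length, hlen⟩ : QV q d) := by
    unfold QV.swapAt; exact (dif_neg hnu).trans (dif_pos ⟨hp, hlen⟩)
  exact congrArg Subtype.val e

lemma swap_of_other {w : QV q d} (h1 : ¬ u.val <+: w.val) (h2 : ¬ v.val <+: w.val) :
    QV.swapAt u v w = w := by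
  simp [QV.swapAt, h1, h2]

lemma swap_val_of_pu' {w : QV q d} (t : List (Fin q)) (ht : w.val = u.val ++ t) :
    (QV.swapAt u v w).val = v.val ++ t := by
  rw [swap_val_of_pu u v hl hne ⟨t, ht.symm⟩, ht, List.drop_left]

lemma swap_val_of_pv' {w : QV q d} (t : List (Fin q)) (ht : w.val = v.val ++ t) :
    (QV.swapAt u v w).val = u.val ++ t := by
  rw [swap_val_of_pv u v hl hne ⟨t, ht.symm⟩, ht, List.drop_left]

lemma swap_length (w : QV q d) : (QV.swapAt u v w).val.length = w.val.length := by
  by_cases h1 : u.val <+: w.val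
  · rw [swap_val_of_pu u v hl hne h1]
    have := h1.length_le
    simp only [List.length_append, List.length_drop]; omega
  · by_cases h2 : v.val <+: w.val
    · rw [swap_val_of_pv u v hl hne h2]
      have := h2.length_le
      simp only [List.length_append, List.length_drop]; omega
    · rw [swap_of_other u v hl hne h1 h2]

lemma swap_swap (w : QV q d) : QV.swapAt u v (QV.swapAt u v w) = w := by
  by_cases h1 : u.val <+: w.val
  · obtain ⟨t, ht⟩ := h1
    have h2 : (QV.swapAt u v w).val = v.val ++ t := swap_val_of_pu' u v hl hne t ht.symm
    apply Subtype.ext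
    rw [swap_val_of_pv' u v hl hne t h2, ht]
  · by_cases h2 : v.val <+: w.val
    · obtain ⟨t, ht⟩ := h2
      have h3 : (QV.swapAt u v w).val = u.val ++ t := swap_val_of_pv' u v hl hne t ht.symm
      apply Subtype.ext
      rw [swap_val_of_pu' u v hl hne t h3, ht]
    · rw [swap_of_other u v hl hne h1 h2, swap_of_other u v hl hne h1 h2]

lemma swap_u : QV.swapAt u v u = v := by
  apply Subtype.ext
  simpa using swap_val_of_pu' u v hl hne [] (by simp)

lemma swap_v : QV.swapAt u v v = u := by
  apply Subtype.ext
  simpa using swap_val_of_pv' u v hl hne [] (by simp)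

lemma swap_fix_short {w : QV q d} (h : w.val.length < u.val.length) :
    QV.swapAt u v w = w := by
  apply swap_of_other u v hl hne
  · intro hp; have := hp.length_le; omega
  · intro hp; have := hp.length_le; omega

lemma adj_swap_dir {x w : QV q d} (a : Fin q) (hw : w.val = x.val ++ [a]) :
    (qTree q d).Adj (QV.swapAt u v x) (QV.swapAt u v w) ∨
      (w = u ∧ x.val = u.val.dropLast) ∨ (w = v ∧ x.val = v.val.dropLast) := by
  by_cases h1 : u.val <+: x.val
  · obtain ⟨t, ht⟩ := h1
    left
    have hx : (QV.swapAt u v x).val = v.val ++ t := swap_val_of_pu' u v hl hne t ht.symm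
    have hw' : (QV.swapAt u v w).val = v.val ++ (t ++ [a]) := by
      apply swap_val_of_pu' u v hl hne
      rw [hw, ← ht]; simp
    rw [qTree_adj]; left; exact ⟨a, by rw [hx, hw']; simp⟩
  · by_cases h2 : v.val <+: x.val
    · obtain ⟨t, ht⟩ := h2
      left
      have hx : (QV.swapAt u v x).val = u.val ++ t := swap_val_of_pv' u v hl hne t ht.symm
      have hw' : (QV.swapAt u v w).val = u.val ++ (t ++ [a]) := by
        apply swap_val_of_pv' u v hl hne
        rw [hw, ← ht]; simp
      rw [qTree_adj]; left; exact ⟨a, by rw [hx, hw']; simp⟩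
    · have hx : QV.swapAt u v x = x := swap_of_other u v hl hne h1 h2
      by_cases h3 : u.val <+: w.val
      · right; left
        have hwu : w.val = u.val := by
          rcases h3 with ⟨s, hs⟩
          rcases List.eq_nil_or_concat s with rfl | ⟨s', b, rfl⟩
          · rw [← hs]; simp
          · exfalso; apply h1
            have : x.val ++ [a] = u.val ++ s' ++ [b] := by rw [← hw, ← hs]; simp
            have := List.append_inj_left' this (by rfl)
            exact ⟨s', this.symm⟩
        refine ⟨Subtype.ext hwu, ?_⟩
        rw [← hwu, hw]; simp
      · by_cases h4 : v.val <+: w.val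
        · right; right
          have hwv : w.val = v.val := by
            rcases h4 with ⟨s, hs⟩
            rcases List.eq_nil_or_concat s with rfl | ⟨s', b, rfl⟩
            · rw [← hs]; simp
            · exfalso; apply h2
              have : x.val ++ [a] = v.val ++ s' ++ [b] := by rw [← hw, ← hs]; simp
              have := List.append_inj_left' this (by rfl)
              exact ⟨s', this.symm⟩
          refine ⟨Subtype.ext hwv, ?_⟩
          rw [← hwv, hw]; simp
        · left
          rw [hx, swap_of_other u v hl hne h3 h4]
          rw [qTree_adj]; left; exact ⟨a, hw⟩

lemma adj_swap {x w : QV q d} (hadj : (qTree q d).Adj x w) :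
    (qTree q d).Adj (QV.swapAt u v x) (QV.swapAt u v w) ∨
      (w = u ∧ x.val = u.val.dropLast) ∨ (w = v ∧ x.val = v.val.dropLast) ∨
      (x = u ∧ w.val = u.val.dropLast) ∨ (x = v ∧ w.val = v.val.dropLast) := by
  rcases (qTree_adj).1 hadj with ⟨a, hw⟩ | ⟨a, hx⟩
  · rcases adj_swap_dir u v hl hne a hw with h | h | h
    · exact Or.inl h
    · exact Or.inr (Or.inl h)
    · exact Or.inr (Or.inr (Or.inl h))
  · rcases adj_swap_dir u v hl hne a hx with h | h | h
    · exact Or.inl h.symm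
    · exact Or.inr (Or.inr (Or.inr (Or.inl h)))
    · exact Or.inr (Or.inr (Or.inr (Or.inr h)))

end swap

/-! ### Border and level-count lemmas for treeswaps -/

section bdr
variable (S : Set (QV q d)) (u v : QV q d)
  (hl : u.val.length = v.val.length) (hne : u.val ≠ v.val) (hu0 : u.val ≠ [])
include hl hne hu0

lemma swap_inj : Function.Injective (QV.swapAt u v) :=
  Function.LeftInverse.injective (g := QV.swapAt u v) (swap_swap u v hl hne)

lemma hv0 : v.val ≠ [] := by
  intro h; apply hu0
  have := hl; rw [h] at this
  simpa using List.length_eq_zero_iff.mp (by simpa using this)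

lemma swap_par_u : QV.swapAt u v (par u) = par u := by
  apply swap_fix_short u v hl hne
  show (u.val.dropLast).length < _
  rw [List.length_dropLast]
  have : 0 < u.val.length := List.length_pos_iff.mpr hu0
  omega

lemma swap_par_v : QV.swapAt u v (par v) = par v := by
  apply swap_fix_short u v hl hne
  show (v.val.dropLast).length < _
  rw [List.length_dropLast]
  have : 0 < v.val.length := List.length_pos_iff.mpr (hv0 u v hl hne hu0)
  omega

lemma border_image_subset
    (H1 : v ∈ S → par u ∉ S → ∃ y ∈ S, (qTree q d).Adj y (par u))
    (H2 : par u ∈ S → v ∉ S → ∃ y ∈ S, (qTree q d).Adj y v)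
    (H3 : u ∈ S → par v ∉ S → ∃ y ∈ S, (qTree q d).Adj y (par v))
    (H4 : par v ∈ S → u ∉ S → ∃ y ∈ S, (qTree q d).Adj y u) :
    (QV.swapAt u v) '' (vertexBorder (qTree q d) (QV.treeswap S u v)) ⊆
      vertexBorder (qTree q d) S := by
  rintro y ⟨w, ⟨hw1, x, hx1, hadj⟩, rfl⟩
  have hw1' : QV.swapAt u v w ∉ S := hw1
  have hx1' : QV.swapAt u v x ∈ S := hx1
  refine ⟨hw1', ?_⟩
  rcases adj_swap u v hl hne hadj with h | ⟨hwu, hxp⟩ | ⟨hwv, hxp⟩ | ⟨hxu, hwp⟩ | ⟨hxv, hwp⟩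
  · exact ⟨QV.swapAt u v x, hx1', h⟩
  · have hx : x = par u := Subtype.ext hxp
    rw [hx, swap_par_u u v hl hne hu0] at hx1'
    rw [hwu, swap_u u v hl hne] at hw1' ⊢
    obtain ⟨y, hy, hadj'⟩ := H2 hx1' hw1'
    exact ⟨y, hy, hadj'⟩
  · have hx : x = par v := Subtype.ext hxp
    rw [hx, swap_par_v u v hl hne hu0] at hx1'
    rw [hwv, swap_v u v hl hne] at hw1' ⊢
    obtain ⟨y, hy, hadj'⟩ := H4 hx1' hw1'
    exact ⟨y, hy, hadj'⟩
  · have hw : w = par u := Subtype.ext hwp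
    rw [hxu, swap_u u v hl hne] at hx1'
    rw [hw, swap_par_u u v hl hne hu0] at hw1' ⊢
    obtain ⟨y, hy, hadj'⟩ := H1 hx1' hw1'
    exact ⟨y, hy, hadj'⟩
  · have hw : w = par v := Subtype.ext hwp
    rw [hxv, swap_v u v hl hne] at hx1'
    rw [hw, swap_par_v u v hl hne hu0] at hw1' ⊢
    obtain ⟨y, hy, hadj'⟩ := H3 hx1' hw1'
    exact ⟨y, hy, hadj'⟩

lemma border_ncard_le
    (H1 : v ∈ S → par u ∉ S → ∃ y ∈ S, (qTree q d).Adj y (par u))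
    (H2 : par u ∈ S → v ∉ S → ∃ y ∈ S, (qTree q d).Adj y v)
    (H3 : u ∈ S → par v ∉ S → ∃ y ∈ S, (qTree q d).Adj y (par v))
    (H4 : par v ∈ S → u ∉ S → ∃ y ∈ S, (qTree q d).Adj y u) :
    (vertexBorder (qTree q d) (QV.treeswap S u v)).ncard ≤
      (vertexBorder (qTree q d) S).ncard := by
  calc (vertexBorder (qTree q d) (QV.treeswap S u v)).ncard
      = ((QV.swapAt u v) '' (vertexBorder (qTree q d) (QV.treeswap S u v))).ncard :=
        (Set.ncard_image_of_injective _ (swap_inj u v hl hne hu0)).symm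
    _ ≤ (vertexBorder (qTree q d) S).ncard :=
        Set.ncard_le_ncard (border_image_subset S u v hl hne hu0 H1 H2 H3 H4)
          (Set.toFinite _)

lemma treeswap_level_ncard (L : Set (QV q d)) (hL : ∀ w, w ∈ L ↔ (QV.swapAt u v w) ∈ L) :
    (QV.treeswap S u v ∩ L).ncard = (S ∩ L).ncard := by
  have himg : (QV.swapAt u v) '' (QV.treeswap S u v ∩ L) = S ∩ L := by
    ext y
    constructor
    · rintro ⟨w, ⟨hw1, hw2⟩, rfl⟩
      exact ⟨hw1, (hL w).1 hw2⟩
    · rintro ⟨hy1, hy2⟩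
      refine ⟨QV.swapAt u v y, ⟨?_, ?_⟩, swap_swap u v hl hne y⟩
      · show QV.swapAt u v (QV.swapAt u v y) ∈ S
        rw [swap_swap u v hl hne]; exact hy1
      · exact (hL _).1 hy2
  rw [← himg, Set.ncard_image_of_injective _ (swap_inj u v hl hne hu0)]

end bdr

/-! ### The measure -/

lemma sum_range_two_pow (n : ℕ) : ∑ j ∈ Finset.range n, 2 ^ j = 2 ^ n - 1 := by
  induction n with
  | zero => simp
  | succ n ih =>
      rw [Finset.sum_range_succ, ih]
      have : 1 ≤ 2 ^ n := Nat.one_le_two_pow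
      omega

lemma finset_lex_sum {B : ℕ} (A A' : Finset ℕ) (hA : ∀ e ∈ A, e ≤ B) (e₀ : ℕ)
    (h0 : e₀ ∈ A') (h0' : e₀ ∉ A) (hagree : ∀ e < e₀, (e ∈ A ↔ e ∈ A')) :
    ∑ e ∈ A, 2 ^ (B - e) < ∑ e ∈ A', 2 ^ (B - e) := by
  classical
  have hsplitA := Finset.sum_filter_add_sum_filter_not A (fun e => e < e₀) (fun e => 2 ^ (B - e))
  have hsplitA' := Finset.sum_filter_add_sum_filter_not A' (fun e => e < e₀) (fun e => 2 ^ (B - e))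
  have hfeq : A.filter (fun e => e < e₀) = A'.filter (fun e => e < e₀) := by
    ext e
    simp only [Finset.mem_filter]
    constructor
    · rintro ⟨h1, h2⟩; exact ⟨(hagree e h2).1 h1, h2⟩
    · rintro ⟨h1, h2⟩; exact ⟨(hagree e h2).2 h1, h2⟩
  set C := A.filter (fun e => ¬ e < e₀) with hC
  have hCmem : ∀ e ∈ C, e₀ < e ∧ e ≤ B := by
    intro e he
    rw [hC, Finset.mem_filter] at he
    have : e ≠ e₀ := by rintro rfl; exact h0' he.1
    exact ⟨by omega, hA e he.1⟩
  have hCsum : ∑ e ∈ C, 2 ^ (B - e) < 2 ^ (B - e₀) := by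
    have hinj : ∀ x ∈ C, ∀ y ∈ C, B - x = B - y → x = y := by
      intro x hx y hy h
      have := hCmem x hx; have := hCmem y hy; omega
    rw [← Finset.sum_image (f := fun j => (2:ℕ) ^ j) (g := fun e => B - e) hinj]
    have hsub : C.image (fun e => B - e) ⊆ Finset.range (B - e₀) := by
      intro j hj
      rw [Finset.mem_image] at hj
      obtain ⟨e, he, rfl⟩ := hj
      have := hCmem e he
      rw [Finset.mem_range]; omega
    calc ∑ j ∈ C.image (fun e => B - e), 2 ^ j ≤ ∑ j ∈ Finset.range (B - e₀), 2 ^ j :=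
          Finset.sum_le_sum_of_subset hsub
      _ = 2 ^ (B - e₀) - 1 := sum_range_two_pow _
      _ < 2 ^ (B - e₀) := by have : 1 ≤ 2 ^ (B - e₀) := Nat.one_le_two_pow; omega
  have hA'ge : 2 ^ (B - e₀) ≤ ∑ e ∈ A'.filter (fun e => ¬ e < e₀), 2 ^ (B - e) := by
    apply Finset.single_le_sum (f := fun e => 2 ^ (B - e)) (fun _ _ => Nat.zero_le _)
    rw [Finset.mem_filter]
    exact ⟨h0, by omega⟩
  rw [hfeq] at hsplitA
  omega

lemma encQ_inj : Function.Injective (fun w : QV q d => enc q w.val) := by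
  intro w w' h
  simp only at h
  apply Subtype.ext
  by_contra hnev
  rcases Nat.lt_trichotomy w.val.length w'.val.length with hlt | heq | hgt
  · exact absurd h (Nat.ne_of_lt (enc_lt_of_length_lt hlt))
  · rcases lex_trichotomy w.val w'.val heq with h' | h' | h'
    · exact hnev h'
    · exact absurd h (Nat.ne_of_lt (enc_lt_of_lex heq h'))
    · exact absurd h.symm (Nat.ne_of_lt (enc_lt_of_lex heq.symm h'))
  · exact absurd h.symm (Nat.ne_of_lt (enc_lt_of_length_lt hgt))

noncomputable def msr (S : Set (QV q d)) : ℕ :=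
  ∑ w ∈ (Set.toFinite S).toFinset, 2 ^ ((q + 1) ^ (d + 1) - enc q w.val)

lemma msr_lt {S S' : Set (QV q d)} (v₀ : QV q d) (h1 : v₀ ∈ S') (h2 : v₀ ∉ S)
    (h3 : ∀ w : QV q d, enc q w.val < enc q v₀.val → (w ∈ S ↔ w ∈ S')) :
    msr S < msr S' := by
  classical
  set B := (q + 1) ^ (d + 1) with hBdef
  have hB : ∀ w : QV q d, enc q w.val ≤ B := by
    intro w
    have ha := enc_lt_pow w.val
    have hb : (q + 1) ^ w.val.length ≤ (q + 1) ^ (d + 1) :=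
      Nat.pow_le_pow_right (by omega) (by have := w.prop; omega)
    omega
  unfold msr
  have hinjA : ∀ x ∈ (Set.toFinite S).toFinset, ∀ y ∈ (Set.toFinite S).toFinset,
      enc q x.val = enc q y.val → x = y := fun x _ y _ h => encQ_inj h
  have hinjA' : ∀ x ∈ (Set.toFinite S').toFinset, ∀ y ∈ (Set.toFinite S').toFinset,
      enc q x.val = enc q y.val → x = y := fun x _ y _ h => encQ_inj h
  rw [← Finset.sum_image (f := fun e => (2:ℕ) ^ (B - e))
        (g := fun w : QV q d => enc q w.val) hinjA,
      ← Finset.sum_image (f := fun e => (2:ℕ) ^ (B - e))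
        (g := fun w : QV q d => enc q w.val) hinjA']
  apply finset_lex_sum
  · intro e he
    rw [Finset.mem_image] at he
    obtain ⟨w, _, rfl⟩ := he
    exact hB w
  · rw [Finset.mem_image]
    exact ⟨v₀, (Set.Finite.mem_toFinset _).mpr h1, rfl⟩
  · rw [Finset.mem_image]
    rintro ⟨w, hw, hwe⟩
    rw [Set.Finite.mem_toFinset] at hw
    have : w = v₀ := encQ_inj hwe
    exact h2 (this ▸ hw)
  · intro e he
    constructor
    · rw [Finset.mem_image, Finset.mem_image]
      rintro ⟨w, hw, rfl⟩
      rw [Set.Finite.mem_toFinset] at hw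
      exact ⟨w, (Set.Finite.mem_toFinset _).mpr ((h3 w he).1 hw), rfl⟩
    · rw [Finset.mem_image, Finset.mem_image]
      rintro ⟨w, hw, rfl⟩
      rw [Set.Finite.mem_toFinset] at hw
      exact ⟨w, (Set.Finite.mem_toFinset _).mpr ((h3 w he).2 hw), rfl⟩

end LO

theorem exists_left_ordered_compression (q d : ℕ) (hq : 2 ≤ q) (hd : 1 ≤ d)
    (S : Set (QV q d)) :
    ∃ S' : Set (QV q d), QV.LeftOrdered S' ∧
      (∀ i, (S' ∩ QV.level q d i).ncard = (S ∩ QV.level q d i).ncard) ∧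
      (vertexBorder (qTree q d) S').ncard ≤ (vertexBorder (qTree q d) S).ncard := by
  classical
  set 𝒞 : Set (Set (QV q d)) :=
    {T | (∀ i, (T ∩ QV.level q d i).ncard = (S ∩ QV.level q d i).ncard) ∧
      (vertexBorder (qTree q d) T).ncard ≤ (vertexBorder (qTree q d) S).ncard} with h𝒞
  have hSC : S ∈ 𝒞 := ⟨fun i => rfl, le_refl _⟩
  obtain ⟨a, haC, hmax⟩ := Set.Finite.exists_maximalFor LO.msr 𝒞 (Set.toFinite 𝒞) ⟨S, hSC⟩
  refine ⟨a, ?_, haC.1, haC.2⟩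
  by_contra hno
  have hP : ∃ i, ∃ u v : QV q d, u.val.length = i ∧ QV.Swappable a u v := by
    simp only [QV.LeftOrdered, QV.LevelLeftOrdered] at hno
    push_neg at hno
    obtain ⟨i, u, v, h1, h2⟩ := hno
    exact ⟨i, u, v, h1, h2⟩
  obtain ⟨u, v, hulen, hsw⟩ := Nat.find_spec hP
  have hmin : ∀ j, j < Nat.find hP →
      ¬ ∃ u v : QV q d, u.val.length = j ∧ QV.Swappable a u v :=
    fun j hj => Nat.find_min hP hj
  obtain ⟨⟨hlen, hlex⟩, hcases⟩ := hsw
  have hne : u.val ≠ v.val := by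
    intro h; rw [h] at hlex; exact LO.lex_irrefl _ hlex
  have hu0 : u.val ≠ [] := by
    intro h
    have h2 : v.val = [] := List.length_eq_zero_iff.mp (by rw [← hlen, h]; rfl)
    rw [h, h2] at hlex; cases hlex
  have hv0 : v.val ≠ [] := LO.hv0 u v hlen hne hu0
  have hu_len_pos : 0 < u.val.length := List.length_pos_iff.mpr hu0
  have hpulen : (LO.par u).val.length = u.val.length - 1 := by
    simp [LO.par, List.length_dropLast]
  have hpvlen : (LO.par v).val.length = u.val.length - 1 := by
    simp [LO.par, List.length_dropLast, hlen]
  have hchild_adj : ∀ (c y : QV q d), QV.IsChildOf c y → (qTree q d).Adj c y := by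
    rintro c y ⟨b, hb⟩
    exact Or.inr ⟨b, hb⟩
  have hv_child_pv : QV.IsChildOf v (LO.par v) :=
    ⟨v.val.getLast hv0, (List.dropLast_append_getLast hv0).symm⟩
  have hpadj_u : (qTree q d).Adj (LO.par u) u :=
    Or.inl ⟨u.val.getLast hu0, (List.dropLast_append_getLast hu0).symm⟩
  have hdrop : (LO.par u).val = (LO.par v).val ∨
      List.Lex (· < ·) (LO.par u).val (LO.par v).val := LO.lex_dropLast hlex hlen
  have hlev_lt : u.val.length - 1 < Nat.find hP := by omega
  have F1 : LO.par v ∈ a → LO.par u ∈ a := by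
    intro hpv
    rcases hdrop with h | h
    · rw [show LO.par u = LO.par v from Subtype.ext h]; exact hpv
    · by_contra hpu
      exact hmin _ hlev_lt ⟨LO.par u, LO.par v, hpulen,
        ⟨⟨by rw [hpulen, hpvlen], h⟩, Or.inl ⟨hpu, hpv⟩⟩⟩
  have F2 : v ∈ a → LO.par u ∉ a → ∃ y ∈ a, (qTree q d).Adj y (LO.par u) := by
    intro hv hpu
    rcases hdrop with h | h
    · refine ⟨v, hv, ?_⟩
      rw [show LO.par u = LO.par v from Subtype.ext h]
      exact hchild_adj v (LO.par v) hv_child_pv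
    · by_cases hpv : LO.par v ∈ a
      · exact absurd (F1 hpv) hpu
      · by_contra hno2
        push_neg at hno2
        apply hmin _ hlev_lt
        refine ⟨LO.par u, LO.par v, hpulen, ⟨⟨by rw [hpulen, hpvlen], h⟩,
          Or.inr ⟨hpu, hpv, ?_, v, hv_child_pv, hv⟩⟩⟩
        intro w hw hwa
        exact hno2 w hwa (hchild_adj w (LO.par u) hw)
  have hLlev : ∀ i (w : QV q d), w ∈ QV.level q d i ↔ QV.swapAt u v w ∈ QV.level q d i := by
    intro i w
    show w.val.length = i ↔ (QV.swapAt u v w).val.length = i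
    rw [LO.swap_length u v hlen hne]
  have hcounts : ∀ i, (QV.treeswap a u v ∩ QV.level q d i).ncard =
      (S ∩ QV.level q d i).ncard :=
    fun i => (LO.treeswap_level_ncard a u v hlen hne hu0 _ (hLlev i)).trans (haC.1 i)
  have H4 : LO.par v ∈ a → u ∉ a → ∃ y ∈ a, (qTree q d).Adj y u :=
    fun hpv _ => ⟨LO.par u, F1 hpv, hpadj_u⟩
  rcases hcases with ⟨hu_not, hv_in⟩ | ⟨hu_not, hv_not, hchu, c, hc_child, hc_in⟩
  · -- Case (i): u ∉ a, v ∈ a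
    have hbord : (vertexBorder (qTree q d) (QV.treeswap a u v)).ncard ≤
        (vertexBorder (qTree q d) S).ncard := by
      refine le_trans (LO.border_ncard_le a u v hlen hne hu0 ?_ ?_ ?_ H4) haC.2
      · exact fun _ hpu => F2 hv_in hpu
      · exact fun _ hv' => absurd hv_in hv'
      · exact fun hu' _ => absurd hu' hu_not
    have hC'' : QV.treeswap a u v ∈ 𝒞 := ⟨hcounts, hbord⟩
    have hmem : u ∈ QV.treeswap a u v := by
      show QV.swapAt u v u ∈ a
      rw [LO.swap_u u v hlen hne]; exact hv_in
    have hlt : LO.msr a < LO.msr (QV.treeswap a u v) := by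
      apply LO.msr_lt u hmem hu_not
      intro w hw
      have hfix : QV.swapAt u v w = w := by
        by_cases hp1 : u.val <+: w.val
        · exfalso
          obtain ⟨t, ht⟩ := hp1
          cases t with
          | nil =>
              have hww : w.val = u.val := by rw [← ht]; simp
              rw [hww] at hw; exact lt_irrefl _ hw
          | cons b t' =>
              have hlen' : u.val.length < w.val.length := by
                rw [← ht]; simp
              exact absurd hw (not_lt.mpr (le_of_lt (LO.enc_lt_of_length_lt hlen')))
        · by_cases hp2 : v.val <+: w.val
          · exfalso
            have hge : v.val.length ≤ w.val.length := hp2.length_le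
            rcases eq_or_lt_of_le hge with heq | hlt'
            · have hvw : v.val = w.val := List.IsPrefix.eq_of_length hp2 heq
              have h5 : LO.enc q u.val < LO.enc q v.val := LO.enc_lt_of_lex hlen hlex
              rw [← hvw] at hw
              omega
            · have hlw : u.val.length < w.val.length := by rw [hlen]; exact hlt'
              exact absurd hw (not_lt.mpr (le_of_lt (LO.enc_lt_of_length_lt hlw)))
          · exact LO.swap_of_other u v hlen hne hp1 hp2
      show w ∈ a ↔ QV.swapAt u v w ∈ a
      rw [hfix]
    have := hmax hC'' (le_of_lt hlt)
    omega
  · -- Case (ii)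
    obtain ⟨bx, hbx⟩ := hc_child
    have hlenvd : v.val.length + 1 ≤ d := by
      have := c.prop
      rw [hbx] at this
      simpa using this
    have hlenud : u.val.length + 1 ≤ d := by rw [hlen]; exact hlenvd
    have hchvlen : ∀ b : Fin q, (v.val ++ [b]).length ≤ d := fun b => by simpa using hlenvd
    have hchulen : ∀ b : Fin q, (u.val ++ [b]).length ≤ d := fun b => by simpa using hlenud
    let chv : Fin q → QV q d := fun b => ⟨v.val ++ [b], hchvlen b⟩
    let chu : Fin q → QV q d := fun b => ⟨u.val ++ [b], hchulen b⟩
    have hchv_val : ∀ b, (chv b).val = v.val ++ [b] := fun b => rfl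
    have hchu_val : ∀ b, (chu b).val = u.val ++ [b] := fun b => rfl
    have hDne : (Finset.univ.filter (fun b => chv b ∈ a)).Nonempty := by
      refine ⟨bx, ?_⟩
      rw [Finset.mem_filter]
      refine ⟨Finset.mem_univ _, ?_⟩
      have hcv : chv bx = c := Subtype.ext hbx.symm
      rw [hcv]; exact hc_in
    set b₀ := (Finset.univ.filter (fun b => chv b ∈ a)).min' hDne with hb0
    have hb₀mem : chv b₀ ∈ a := by
      have := (Finset.univ.filter (fun b => chv b ∈ a)).min'_mem hDne
      rw [Finset.mem_filter] at this
      exact this.2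
    have hb₀min : ∀ b : Fin q, b < b₀ → chv b ∉ a := by
      intro b hb hbin
      have hle : b₀ ≤ b := Finset.min'_le _ b
        (by rw [Finset.mem_filter]; exact ⟨Finset.mem_univ _, hbin⟩)
      exact absurd hb (not_lt.mpr hle)
    have hbord : (vertexBorder (qTree q d) (QV.treeswap a u v)).ncard ≤
        (vertexBorder (qTree q d) S).ncard := by
      refine le_trans (LO.border_ncard_le a u v hlen hne hu0 ?_ ?_ ?_ H4) haC.2
      · exact fun hv' _ => absurd hv' hv_not
      · exact fun _ _ => ⟨c, hc_in, hchild_adj c v ⟨bx, hbx⟩⟩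
      · exact fun hu' _ => absurd hu' hu_not
    have hC'' : QV.treeswap a u v ∈ 𝒞 := ⟨hcounts, hbord⟩
    have hmem : chu b₀ ∈ QV.treeswap a u v := by
      show QV.swapAt u v (chu b₀) ∈ a
      have hsv : QV.swapAt u v (chu b₀) = chv b₀ :=
        Subtype.ext (LO.swap_val_of_pu' u v hlen hne [b₀] (hchu_val b₀))
      rw [hsv]; exact hb₀mem
    have hnot : chu b₀ ∉ a := hchu (chu b₀) ⟨b₀, hchu_val b₀⟩
    have hlt : LO.msr a < LO.msr (QV.treeswap a u v) := by
      apply LO.msr_lt (chu b₀) hmem hnot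
      intro w hw0
      have hw : LO.enc q w.val < LO.enc q (u.val ++ [b₀]) := hw0
      show w ∈ a ↔ QV.swapAt u v w ∈ a
      by_cases hp1 : u.val <+: w.val
      · obtain ⟨t, ht⟩ := hp1
        cases t with
        | nil =>
            have hwu : w = u := Subtype.ext (by rw [← ht]; simp)
            rw [hwu, LO.swap_u u v hlen hne]
            exact iff_of_false hu_not hv_not
        | cons b t' =>
            cases t' with
            | nil =>
                have hwval : w.val = u.val ++ [b] := ht.symm
                have hbb : b < b₀ := by
                  rcases lt_trichotomy b b₀ with h | h | h
                  · exact h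
                  · exfalso; rw [hwval, h] at hw; exact lt_irrefl _ hw
                  · exfalso
                    have henc := LO.enc_lt_of_lex (l := u.val ++ [b₀]) (l' := u.val ++ [b])
                      (by simp) (LO.lex_snoc h u.val)
                    rw [hwval] at hw; omega
                have hsw' : QV.swapAt u v w = chv b :=
                  Subtype.ext (LO.swap_val_of_pu' u v hlen hne [b] hwval)
                rw [hsw']
                exact iff_of_false (hchu w ⟨b, hwval⟩) (hb₀min b hbb)
            | cons b' t'' =>
                exfalso
                have hlw : (u.val ++ [b₀]).length < w.val.length := by
                  rw [← ht]; simp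
                exact absurd hw (not_lt.mpr (le_of_lt (LO.enc_lt_of_length_lt hlw)))
      · by_cases hp2 : v.val <+: w.val
        · obtain ⟨t, ht⟩ := hp2
          cases t with
          | nil =>
              have hwv : w = v := Subtype.ext (by rw [← ht]; simp)
              rw [hwv, LO.swap_v u v hlen hne]
              exact iff_of_false hv_not hu_not
          | cons b t' =>
              exfalso
              cases t' with
              | nil =>
                  have hwval : w.val = v.val ++ [b] := ht.symm
                  have hlex2 : List.Lex (· < ·) (u.val ++ [b₀]) (v.val ++ [b]) :=
                    LO.lex_append hlex hlen [b₀] [b]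
                  have henc := LO.enc_lt_of_lex (by simp [hlen]) hlex2
                  rw [hwval] at hw; omega
              | cons b' t'' =>
                  have hlw : (u.val ++ [b₀]).length < w.val.length := by
                    rw [← ht]; simp [hlen]
                  exact absurd hw (not_lt.mpr (le_of_lt (LO.enc_lt_of_length_lt hlw)))
        · rw [LO.swap_of_other u v hlen hne hp1 hp2]
    have := hmax hC'' (le_of_lt hlt)
    omega
end

section
/- Let T be the complete q-ary tree of depth d (q ≥ 2, d ≥ 1) and let S ⊆ V(T) be left-ordered and down-compressed. Then for every vertex u ∈ S, one of the following holds: (1) all children of u are in S; (2) exactly one child of u, say v, is not in S, and v has at least one child not in S; or (3) exactly two children of u, say v₁ and v₂, are not in S, where v₁ has at least one child in S and at least one child not in S, and v₂ has no children in S. -/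
open scoped Classical

section AuxLemmas

variable {q d : ℕ}

lemma aux_child_len {w u : QV q d} (h : QV.IsChildOf w u) :
    w.val.length = u.val.length + 1 := by
  obtain ⟨a, ha⟩ := h; simp [ha]

lemma aux_parent_unique {w x y : QV q d} (hx : QV.IsChildOf w x)
    (hy : QV.IsChildOf w y) : x = y := by
  obtain ⟨a, ha⟩ := hx; obtain ⟨b, hb⟩ := hy
  exact Subtype.ext (List.append_inj' (ha.symm.trans hb) rfl).1

lemma aux_lex_append {α : Type*} [LT α] {l₁ l₂ : List α}
    (h : List.Lex (· < ·) l₁ l₂) :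
    l₁.length = l₂.length →
      ∀ a b : α, List.Lex (· < ·) (l₁ ++ [a]) (l₂ ++ [b]) := by
  induction h with
  | nil => intro hlen; simp at hlen
  | @rel x t₁ y t₂ hr => intro hlen a b; exact List.Lex.rel hr
  | @cons x t₁ t₂ h ih =>
      intro hlen a b
      exact List.Lex.cons (ih (by simpa using hlen) a b)

lemma aux_lex_single (l : List (Fin q)) {a b : Fin q} (h : a < b) :
    List.Lex (· < ·) (l ++ [a]) (l ++ [b]) := by
  induction l with
  | nil => exact List.Lex.rel h
  | cons x t ih => exact List.Lex.cons ih

lemma aux_lex_total (l : List (Fin q)) {a b : Fin q} (h : a ≠ b) :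
    List.Lex (· < ·) (l ++ [a]) (l ++ [b]) ∨
      List.Lex (· < ·) (l ++ [b]) (l ++ [a]) := by
  rcases lt_or_gt_of_ne h with h | h
  · exact Or.inl (aux_lex_single l h)
  · exact Or.inr (aux_lex_single l h)

/-- Key lemma: if `S` is down-compressed, `u ∈ S` and `v ∉ S` is a child of `u`,
then `v` has a "dead" child: a child not in `S` none of whose children is in `S`. -/
lemma aux_hasDeadChild {S : Set (QV q d)} (hdc : QV.DownCompressed S)
    {u v : QV q d} (hu : u ∈ S) (hv : QV.IsChildOf v u) (hvs : v ∉ S) :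
    ∃ c, QV.IsChildOf c v ∧ c ∉ S ∧ ∀ c', QV.IsChildOf c' c → c' ∉ S := by
  by_contra hcon
  push_neg at hcon
  set B := vertexBorder (qTree q d) S with hBdef
  set B' := vertexBorder (qTree q d) ((S ∪ {v}) \ {u}) with hB'def
  have hvB : v ∈ B := ⟨hvs, u, hu, Or.inl hv⟩
  have hsub : B' ⊆ (B \ {v}) ∪ {u} := by
    rintro x ⟨hxn, y, hy, hadj⟩
    by_cases hxu : x = u
    · exact Or.inr (by simp [hxu])
    have hxn' : x ∉ S ∪ {v} := fun h => hxn ⟨h, by simpa using hxu⟩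
    have hxS : x ∉ S := fun h => hxn' (Or.inl h)
    have hxv : x ≠ v := fun h => hxn' (Or.inr (by simp [h]))
    obtain ⟨hy1, hy2⟩ := hy
    have hyu : y ≠ u := by simpa using hy2
    rcases hy1 with hyS | hyv
    · exact Or.inl ⟨⟨hxS, y, hyS, hadj⟩, by simpa using hxv⟩
    · have hyv' : y = v := by simpa using hyv
      rw [hyv'] at hadj
      rcases hadj with ⟨a, ha⟩ | ⟨a, ha⟩
      · -- x is a child of v
        obtain ⟨c', hc', hc'S⟩ := hcon x ⟨a, ha⟩ hxS
        exact Or.inl ⟨⟨hxS, c', hc'S, Or.inr hc'⟩, by simpa using hxv⟩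
      · -- y = v is a child of x, so x = u
        exact absurd (aux_parent_unique ⟨a, ha⟩ hv) hxu
  have h1 : B'.ncard ≤ ((B \ {v}) ∪ {u}).ncard :=
    Set.ncard_le_ncard hsub (Set.toFinite _)
  have h2 : ((B \ {v}) ∪ {u}).ncard ≤ (B \ {v}).ncard + 1 := by
    simpa using Set.ncard_union_le (B \ {v}) {u}
  have h3 : (B \ {v}).ncard = B.ncard - 1 :=
    Set.ncard_diff_singleton_of_mem hvB
  have h4 : 1 ≤ B.ncard := (Set.ncard_pos (Set.toFinite _)).mpr ⟨v, hvB⟩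
  have h5 : B.ncard < B'.ncard :=
    (hdc u hu v hvs).2 (by have := aux_child_len hv; omega)
  omega

/-- Step lemma for the descent: if `u ∈ S` has two distinct dead children `v₁, v₂`,
then every dead descendant `w` of `v₂` has a dead child. -/
lemma aux_step {S : Set (QV q d)} (hdc : QV.DownCompressed S)
    {u v₁ v₂ : QV q d} (hu : u ∈ S) (h1 : QV.IsChildOf v₁ u) (h2 : QV.IsChildOf v₂ u)
    (hne : v₁ ≠ v₂) (h1s : v₁ ∉ S) (h2s : v₂ ∉ S)
    (h1d : ∀ w, QV.IsChildOf w v₁ → w ∉ S) (h2d : ∀ w, QV.IsChildOf w v₂ → w ∉ S)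
    {w : QV q d} (hpre : v₂.val <+: w.val) (hws : w ∉ S)
    (hwd : ∀ c, QV.IsChildOf c w → c ∉ S) :
    ∃ c, QV.IsChildOf c w ∧ c ∉ S ∧ ∀ c', QV.IsChildOf c' c → c' ∉ S := by
  by_contra hcon
  push_neg at hcon
  set B := vertexBorder (qTree q d) S with hBdef
  set B' := vertexBorder (qTree q d) ((S ∪ {w}) \ {u}) with hB'def
  have hlen1 : v₁.val.length = u.val.length + 1 := aux_child_len h1
  have hlen2 : v₂.val.length = u.val.length + 1 := aux_child_len h2
  have hwlen : u.val.length + 1 ≤ w.val.length := hlen2 ▸ hpre.length_le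
  have h1B : v₁ ∈ B := ⟨h1s, u, hu, Or.inl h1⟩
  have h2B : v₂ ∈ B := ⟨h2s, u, hu, Or.inl h2⟩
  have hsub : B' ⊆ (B \ {v₁, v₂}) ∪ ({u} ∪ {x : QV q d | ∃ a, w.val = x.val ++ [a]}) := by
    rintro x ⟨hxn, y, hy, hadj⟩
    by_cases hxu : x = u
    · exact Or.inr (Or.inl (by simp [hxu]))
    have hxn' : x ∉ S ∪ {w} := fun h => hxn ⟨h, by simpa using hxu⟩
    have hxS : x ∉ S := fun h => hxn' (Or.inl h)
    have hxw : x ≠ w := fun h => hxn' (Or.inr (by simp [h]))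
    obtain ⟨hy1, hy2⟩ := hy
    have hyu : y ≠ u := by simpa using hy2
    rcases hy1 with hyS | hyw
    · -- y ∈ S
      refine Or.inl ⟨⟨hxS, y, hyS, hadj⟩, ?_⟩
      simp only [Set.mem_insert_iff, Set.mem_singleton_iff, not_or]
      constructor
      · rintro rfl
        rcases hadj with ⟨a, ha⟩ | ⟨a, ha⟩
        · exact hyu (aux_parent_unique ⟨a, ha⟩ h1)
        · exact h1d y ⟨a, ha⟩ hyS
      · rintro rfl
        rcases hadj with ⟨a, ha⟩ | ⟨a, ha⟩
        · exact hyu (aux_parent_unique ⟨a, ha⟩ h2)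
        · exact h2d y ⟨a, ha⟩ hyS
    · have hyw' : y = w := by simpa using hyw
      rw [hyw'] at hadj
      rcases hadj with ⟨a, ha⟩ | ⟨a, ha⟩
      · -- x is a child of w
        obtain ⟨c', hc', hc'S⟩ := hcon x ⟨a, ha⟩ (hwd x ⟨a, ha⟩)
        refine Or.inl ⟨⟨hxS, c', hc'S, Or.inr hc'⟩, ?_⟩
        have hxlen : x.val.length = w.val.length + 1 := by simp [ha]
        simp only [Set.mem_insert_iff, Set.mem_singleton_iff, not_or]
        constructor <;> (rintro rfl; omega)
      · -- x is the parent of w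
        exact Or.inr (Or.inr ⟨a, ha⟩)
  have hpairB : ({v₁, v₂} : Set (QV q d)) ⊆ B :=
    Set.insert_subset h1B (Set.singleton_subset_iff.mpr h2B)
  have hd2 : (B \ {v₁, v₂}).ncard = B.ncard - 2 := by
    rw [Set.ncard_diff hpairB (Set.toFinite _), Set.ncard_pair hne]
  have hge2 : 2 ≤ B.ncard := by
    rw [← Set.ncard_pair hne]
    exact Set.ncard_le_ncard hpairB (Set.toFinite _)
  have hP : ({u} ∪ {x : QV q d | ∃ a, w.val = x.val ++ [a]}).ncard ≤ 2 := by
    have hPle : ({x : QV q d | ∃ a, w.val = x.val ++ [a]}).ncard ≤ 1 := by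
      rcases Set.eq_empty_or_nonempty {x : QV q d | ∃ a, w.val = x.val ++ [a]} with he | ⟨x₀, hx₀⟩
      · simp [he]
      · have hsub' : {x : QV q d | ∃ a, w.val = x.val ++ [a]} ⊆ {x₀} := by
          intro z hz
          obtain ⟨a, ha⟩ := hz; obtain ⟨b, hb⟩ := hx₀
          have : z = x₀ := Subtype.ext (List.append_inj' (ha.symm.trans hb) rfl).1
          simp [this]
        simpa using Set.ncard_le_ncard hsub' (Set.toFinite _)
    have h0 := Set.ncard_union_le ({u} : Set (QV q d)) {x : QV q d | ∃ a, w.val = x.val ++ [a]}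
    have h1 : ({u} : Set (QV q d)).ncard = 1 := Set.ncard_singleton u
    omega
  have h1' : B'.ncard ≤ (B \ {v₁, v₂}).ncard +
      ({u} ∪ {x : QV q d | ∃ a, w.val = x.val ++ [a]}).ncard :=
    le_trans (Set.ncard_le_ncard hsub (Set.toFinite _)) (Set.ncard_union_le _ _)
  have h5 : B.ncard < B'.ncard := (hdc u hu w hws).2 (by omega)
  omega

lemma aux_noTwoDead {S : Set (QV q d)} (hdc : QV.DownCompressed S)
    {u v₁ v₂ : QV q d} (hu : u ∈ S) (h1 : QV.IsChildOf v₁ u) (h2 : QV.IsChildOf v₂ u)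
    (hne : v₁ ≠ v₂) (h1s : v₁ ∉ S) (h2s : v₂ ∉ S)
    (h1d : ∀ w, QV.IsChildOf w v₁ → w ∉ S) (h2d : ∀ w, QV.IsChildOf w v₂ → w ∉ S) :
    False := by
  have key : ∀ n : ℕ, ∀ w : QV q d, v₂.val <+: w.val → w ∉ S →
      (∀ c, QV.IsChildOf c w → c ∉ S) → d ≤ w.val.length + n → False := by
    intro n
    induction n with
    | zero =>
      intro w hpre hws hwd hlen
      obtain ⟨c, hc, _, _⟩ := aux_step hdc hu h1 h2 hne h1s h2s h1d h2d hpre hws hwd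
      have := aux_child_len hc
      have := c.2
      omega
    | succ n ih =>
      intro w hpre hws hwd hlen
      obtain ⟨c, hc, hcs, hcd⟩ := aux_step hdc hu h1 h2 hne h1s h2s h1d h2d hpre hws hwd
      obtain ⟨a, ha⟩ := hc
      have hlenc : c.val.length = w.val.length + 1 := aux_child_len ⟨a, ha⟩
      exact ih c (hpre.trans ⟨[a], ha.symm⟩) hcs hcd (by omega)
  exact key d v₂ (List.prefix_refl _) h2s h2d (by have := v₂.2; omega)

lemma aux_noTwoLive {S : Set (QV q d)} (hlo : QV.LeftOrdered S) (hdc : QV.DownCompressed S)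
    {u v v' : QV q d} (hu : u ∈ S) (hv : QV.IsChildOf v u) (hv' : QV.IsChildOf v' u)
    (hne : v ≠ v') (hvs : v ∉ S) (hvs' : v' ∉ S)
    (hl : ∃ s, QV.IsChildOf s v ∧ s ∈ S) (hl' : ∃ s, QV.IsChildOf s v' ∧ s ∈ S) :
    False := by
  obtain ⟨a, ha⟩ := hv
  obtain ⟨b, hb⟩ := hv'
  have hab : a ≠ b := by
    rintro rfl
    exact hne (Subtype.ext (ha.trans hb.symm))
  have main : ∀ x y : QV q d, QV.IsChildOf x u → QV.IsChildOf y u → x ∉ S →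
      List.Lex (· < ·) x.val y.val → (∃ s, QV.IsChildOf s y ∧ s ∈ S) → False := by
    rintro x y hx hy hxs hlex ⟨s, hs, hsS⟩
    obtain ⟨c, hc, hcs, _⟩ := aux_hasDeadChild hdc hu hx hxs
    obtain ⟨p, hp⟩ := hc
    obtain ⟨r, hr⟩ := hs
    have hxl := aux_child_len hx
    have hyl := aux_child_len hy
    have hlxy : x.val.length = y.val.length := by omega
    have hcl : c.val.length = x.val.length + 1 := aux_child_len ⟨p, hp⟩
    have hsl : s.val.length = y.val.length + 1 := aux_child_len ⟨r, hr⟩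
    have hlex2 : List.Lex (· < ·) c.val s.val := by
      rw [hp, hr]
      exact aux_lex_append hlex hlxy p r
    exact hlo c.val.length c s rfl ⟨⟨by omega, hlex2⟩, Or.inl ⟨hcs, hsS⟩⟩
  rcases aux_lex_total u.val hab with h | h
  · exact main v v' ⟨a, ha⟩ ⟨b, hb⟩ hvs (by rw [ha, hb]; exact h) hl'
  · exact main v' v ⟨b, hb⟩ ⟨a, ha⟩ hvs' (by rw [ha, hb]; exact h) hl

end AuxLemmas

theorem down_compressed_children_trichotomy (q d : ℕ) (hq : 2 ≤ q) (hd : 1 ≤ d)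
    (S : Set (QV q d)) (hlo : QV.LeftOrdered S) (hdc : QV.DownCompressed S)
    (u : QV q d) (hu : u ∈ S) :
    (∀ w, QV.IsChildOf w u → w ∈ S) ∨
    (∃ v, QV.IsChildOf v u ∧ v ∉ S ∧ (∀ w, QV.IsChildOf w u → w ∉ S → w = v) ∧
      ∃ w, QV.IsChildOf w v ∧ w ∉ S) ∨
    (∃ v₁ v₂, v₁ ≠ v₂ ∧ QV.IsChildOf v₁ u ∧ QV.IsChildOf v₂ u ∧ v₁ ∉ S ∧ v₂ ∉ S ∧
      (∀ w, QV.IsChildOf w u → w ∉ S → w = v₁ ∨ w = v₂) ∧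
      (∃ w, QV.IsChildOf w v₁ ∧ w ∈ S) ∧ (∃ w, QV.IsChildOf w v₁ ∧ w ∉ S) ∧
      (∀ w, QV.IsChildOf w v₂ → w ∉ S)) := by
  by_cases hall : ∀ w, QV.IsChildOf w u → w ∈ S
  · exact Or.inl hall
  push_neg at hall
  obtain ⟨v, hv, hvs⟩ := hall
  by_cases hsec : ∃ v', QV.IsChildOf v' u ∧ v' ∉ S ∧ v' ≠ v
  · obtain ⟨v', hv', hvs', hne⟩ := hsec
    by_cases hl : ∃ s, QV.IsChildOf s v ∧ s ∈ S
    · by_cases hl' : ∃ s, QV.IsChildOf s v' ∧ s ∈ S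
      · exact absurd (aux_noTwoLive hlo hdc hu hv hv' (fun h => hne h.symm) hvs hvs' hl hl') id
      · push_neg at hl'
        right; right
        refine ⟨v, v', fun h => hne h.symm, hv, hv', hvs, hvs', ?_, hl, ?_, hl'⟩
        · intro w hw hws
          by_cases h1 : w = v
          · exact Or.inl h1
          by_cases h2 : w = v'
          · exact Or.inr h2
          exfalso
          by_cases hwl : ∃ s, QV.IsChildOf s w ∧ s ∈ S
          · exact aux_noTwoLive hlo hdc hu hw hv h1 hws hvs hwl hl
          · push_neg at hwl
            exact aux_noTwoDead hdc hu hw hv' h2 hws hvs' hwl hl'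
        · obtain ⟨c, hc, hcs, _⟩ := aux_hasDeadChild hdc hu hv hvs
          exact ⟨c, hc, hcs⟩
    · push_neg at hl
      by_cases hl' : ∃ s, QV.IsChildOf s v' ∧ s ∈ S
      · right; right
        refine ⟨v', v, hne, hv', hv, hvs', hvs, ?_, hl', ?_, hl⟩
        · intro w hw hws
          by_cases h1 : w = v'
          · exact Or.inl h1
          by_cases h2 : w = v
          · exact Or.inr h2
          exfalso
          by_cases hwl : ∃ s, QV.IsChildOf s w ∧ s ∈ S
          · exact aux_noTwoLive hlo hdc hu hw hv' h1 hws hvs' hwl hl'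
          · push_neg at hwl
            exact aux_noTwoDead hdc hu hw hv h2 hws hvs hwl hl
        · obtain ⟨c, hc, hcs, _⟩ := aux_hasDeadChild hdc hu hv' hvs'
          exact ⟨c, hc, hcs⟩
      · push_neg at hl'
        exact absurd (aux_noTwoDead hdc hu hv hv' (fun h => hne h.symm) hvs hvs' hl hl') id
  · push_neg at hsec
    right; left
    obtain ⟨c, hc, hcs, _⟩ := aux_hasDeadChild hdc hu hv hvs
    exact ⟨v, hv, hvs, fun w hw hws => hsec w hw hws, ⟨c, hc, hcs⟩⟩
end
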